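/- An ideal I on ω is σ-porous as a subset of Cantor space if and only if I ⊆ Thick⁺, i.e., if and only if no member of I contains arbitrarily long intervals. -/

import Mathlib

open Classical Filter

/-- A set of naturals is thick if it contains arbitrarily long intervals. -/
def Thick (T : Set ℕ) : Prop := ∀ p : ℕ, ∃ n : ℕ, ∀ k ≤ p, n + k ∈ T

/-- A set of naturals is syndetic if it has gaps of bounded length. -/
def Syndetic (S : Set ℕ) : Prop := ∃ p : ℕ, ∀ a : ℕ, ∃ k ≤ p, a + k ∈ S

/-- Piecewise syndetic: intersection of a thick set and a syndetic set. -/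
def PiecewiseSyndetic (P : Set ℕ) : Prop :=
  ∃ T S : Set ℕ, Thick T ∧ Syndetic S ∧ P = T ∩ S

/-- `A` contains an arithmetic progression of length `n`. -/
def HasAPSet (A : Set ℕ) (n : ℕ) : Prop :=
  ∃ a r : ℕ, 0 < r ∧ ∀ i < n, a + i * r ∈ A

/-- The standard ultrametric on Cantor space `2^ω`:
`ρ(x,y) = 2^{-min{i : x i ≠ y i}}` for `x ≠ y`, and `0` otherwise. -/
noncomputable def rho (x y : ℕ → Bool) : ℝ :=
  if h : x = y then 0
  else (2 : ℝ) ^ (-(Nat.find (Function.ne_iff.mp h) : ℤ))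

/-- Open ball in Cantor space with respect to `rho`. -/
def ball (x : ℕ → Bool) (ε : ℝ) : Set (ℕ → Bool) := {y | rho y x < ε}

/-- Metric porosity in Cantor space. -/
def Porous (E : Set (ℕ → Bool)) : Prop :=
  ∃ α : ℝ, 0 < α ∧ α < 1 ∧ ∃ ε₀ : ℝ, 0 < ε₀ ∧
    ∀ ε : ℝ, 0 < ε → ε ≤ ε₀ → ∀ x : ℕ → Bool,
      ∃ y : ℕ → Bool, ball y (α * ε) ⊆ ball x ε \ E

/-- σ-porous: covered by countably many porous sets. -/
def SigmaPorous (E : Set (ℕ → Bool)) : Prop :=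
  ∃ F : ℕ → Set (ℕ → Bool), (∀ n, Porous (F n)) ∧ E ⊆ ⋃ n, F n

/-- The basic clopen cylinder `[s]` of all extensions of a finite string `s`. -/
def Cyl (s : List Bool) : Set (ℕ → Bool) := {x | ∀ i < s.length, x i = s.getD i false}

/-- A point of Cantor space, viewed as a subset of ω, is thick. -/
def ThickB (x : ℕ → Bool) : Prop := ∀ p : ℕ, ∃ n : ℕ, ∀ k ≤ p, x (n + k) = true

/-- `x`, viewed as a subset of ω, contains an arithmetic progression of length `n`. -/
def HasAP (x : ℕ → Bool) (n : ℕ) : Prop :=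
  ∃ a r : ℕ, 0 < r ∧ ∀ i < n, x (a + i * r) = true

/-- `E_n`: points of Cantor space with no arithmetic progression of length `n`. -/
def ESet (n : ℕ) : Set (ℕ → Bool) := {x | ¬ HasAP x n}

/-- The van der Waerden ideal, as a subset of Cantor space. -/
def vdW : Set (ℕ → Bool) := ⋃ n, ESet n

/-- Ideal on ω, with members represented as points of Cantor space. -/
def IsIdealB (I : Set (ℕ → Bool)) : Prop :=
  (fun _ => false) ∈ I ∧
  (∀ x y : ℕ → Bool, (∀ n, x n = true → y n = true) → y ∈ I → x ∈ I) ∧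
  (∀ x y : ℕ → Bool, x ∈ I → y ∈ I → (fun n => x n || y n) ∈ I)

/-- `n`-porosity: every cylinder has a depth-`n` subcylinder missing `A`. -/
def NPorous (n : ℕ) (A : Set (ℕ → Bool)) : Prop :=
  ∀ s : List Bool, ∃ t : List Bool, t.length = n ∧ Cyl (s ++ t) ∩ A = ∅

/-- The length-`n` initial segment of `x` as a finite string. -/
def initSeg (x : ℕ → Bool) (n : ℕ) : List Bool := (List.range n).map x

/-- `S_n(A)`: the maximal size of `A ∩ {m, …, m+n}` over all `m`. -/
noncomputable def Sn (A : Set ℕ) (n : ℕ) : ℕ :=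
  sSup {k : ℕ | ∃ m : ℕ, (A ∩ Set.Icc m (m + n)).ncard = k}

/-- `A = {n², n²+1 : n ≥ 1}`. -/
def ASet : Set ℕ := {k | ∃ n : ℕ, 1 ≤ n ∧ (k = n ^ 2 ∨ k = n ^ 2 + 1)}

/-- `P = {x ∈ 2^ω : x(k) = 0 for all k ∉ A}`. -/
def CantorP : Set (ℕ → Bool) := {x | ∀ k, k ∉ ASet → x k = false}

lemma rho_nonneg (x y : ℕ → Bool) : 0 ≤ rho x y := by
  unfold rho; split
  · exact le_refl 0
  · positivity

lemma rho_self (x : ℕ → Bool) : rho x x = 0 := by simp [rho]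

lemma rho_le_of_agree {x y : ℕ → Bool} {n : ℕ} (h : ∀ i < n, x i = y i) :
    rho x y ≤ (2 : ℝ) ^ (-(n : ℤ)) := by
  unfold rho; split
  · positivity
  · rename_i hxy
    apply zpow_le_zpow_right₀ one_le_two
    have : n ≤ Nat.find (Function.ne_iff.mp hxy) := by
      apply Nat.le_find_iff _ _ |>.mpr
      intro m hm hne
      exact hne (h m hm)
    omega

lemma agree_of_rho_lt {x y : ℕ → Bool} {n : ℕ} (h : rho x y < (2 : ℝ) ^ (-(n : ℤ))) :
    ∀ i ≤ n, x i = y i := by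
  intro i hi
  unfold rho at h
  split at h
  · rename_i hxy; rw [hxy]
  · rename_i hxy
    have hn : n < Nat.find (Function.ne_iff.mp hxy) := by
      by_contra hc
      push_neg at hc
      have := zpow_le_zpow_right₀ (one_le_two (α := ℝ)) (neg_le_neg (Int.ofNat_le.mpr hc))
      linarith
    have := Nat.find_min (Function.ne_iff.mp hxy) (lt_of_le_of_lt hi hn)
    simpa using this







lemma exists_zpow_lt {α : ℝ} (hα : 0 < α) : ∃ d : ℕ, (2:ℝ) ^ (-(d:ℤ)) < α := by
  obtain ⟨d, hd⟩ := exists_pow_lt_of_lt_one hα (by norm_num : (1/2 : ℝ) < 1)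
  refine ⟨d, ?_⟩
  have : ((1:ℝ)/2) ^ d = (2:ℝ) ^ (-(d:ℤ)) := by
    rw [zpow_neg, zpow_natCast, one_div, inv_pow]
  linarith [this ▸ hd]

lemma porous_holes {F : Set (ℕ → Bool)} (hF : Porous F) :
    ∃ C : ℕ, ∀ s : List Bool, ∃ t : List Bool, t.length ≤ C ∧ Cyl (s ++ t) ∩ F = ∅ := by
  obtain ⟨α, hα0, hα1, ε₀, hε₀, hp⟩ := hF
  obtain ⟨d, hd⟩ := exists_zpow_lt hα0
  obtain ⟨M₀, hM₀⟩ := exists_zpow_lt hε₀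
  refine ⟨M₀ + d + 1, ?_⟩
  intro s
  set L := s.length with hL
  set M := max L M₀ with hM
  have h1 : L ≤ M := le_max_left _ _
  have h2 : M₀ ≤ M := le_max_right _ _
  have h3 : M ≤ L + M₀ := max_le (by omega) (by omega)
  set ε : ℝ := (2:ℝ) ^ (-(M:ℤ)) with hε
  have hεpos : 0 < ε := by positivity
  have hεε₀ : ε ≤ ε₀ := by
    refine le_of_lt (lt_of_le_of_lt ?_ hM₀)
    exact zpow_le_zpow_right₀ one_le_two (by omega)
  obtain ⟨y, hy⟩ := hp ε hεpos hεε₀ (fun i => s.getD i false)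
  have hymem : y ∈ ball (fun i => s.getD i false) ε := by
    have : y ∈ ball y (α * ε) := by
      simp only [ball, Set.mem_setOf_eq, rho_self]; positivity
    exact (hy this).1
  have hyx : ∀ i ≤ M, y i = s.getD i false := agree_of_rho_lt hymem
  refine ⟨List.ofFn (n := M + d + 1 - L) (fun j => y (L + (j:ℕ))), ?_, ?_⟩
  · simp; omega
  · ext z
    simp only [Set.mem_inter_iff, Set.mem_empty_iff_false, iff_false, not_and]
    intro hz
    have hlen : (s ++ List.ofFn (n := M + d + 1 - L) (fun j => y (L + (j:ℕ)))).length
        = M + d + 1 := by simp [← hL]; omega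
    have hagree : ∀ i < M + d + 1, z i = y i := by
      intro i hi
      have hzi := hz i (by rw [hlen]; exact hi)
      rcases lt_or_ge i L with hiL | hiL
      · rw [List.getD_append _ _ _ _ hiL] at hzi
        rw [hzi, hyx i (by omega)]
      · rw [List.getD_append_right _ _ _ _ hiL] at hzi
        rw [hzi, List.getD_eq_getElem?_getD]
        rw [List.getElem?_ofFn]
        rw [dif_pos (show i - s.length < M + d + 1 - L by omega)]
        simp only [Option.getD_some]
        congr 1; simp only [← hL]; omega
    have hrho : rho z y ≤ (2:ℝ) ^ (-((M + d + 1 : ℕ):ℤ)) := rho_le_of_agree hagree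
    have hlt : (2:ℝ) ^ (-((M + d + 1 : ℕ):ℤ)) < α * ε := by
      have he : (2:ℝ) ^ (-((M + d + 1 : ℕ):ℤ)) = (2:ℝ) ^ (-((d+1:ℕ):ℤ)) * ε := by
        rw [hε, ← zpow_add₀ (by norm_num : (2:ℝ) ≠ 0)]
        congr 1; push_cast; ring
      rw [he]
      apply mul_lt_mul_of_pos_right _ hεpos
      calc (2:ℝ) ^ (-((d+1:ℕ):ℤ)) ≤ (2:ℝ) ^ (-(d:ℤ)) :=
            zpow_le_zpow_right₀ one_le_two (by omega)
        _ < α := hd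
    have : z ∈ ball y (α * ε) := lt_of_le_of_lt hrho hlt
    exact (hy this).2

lemma porous_G (N : ℕ) : Porous {y : ℕ → Bool | ∀ n, ∃ k ≤ N, y (n + k) = false} := by
  refine ⟨(2:ℝ) ^ (-((N+3:ℕ):ℤ)), by positivity, ?_, 1, one_pos, ?_⟩
  · calc (2:ℝ) ^ (-((N+3:ℕ):ℤ)) ≤ (2:ℝ) ^ (-(1:ℤ)) :=
        zpow_le_zpow_right₀ one_le_two (by push_cast; omega)
      _ < 1 := by norm_num
  · intro ε hε hε1 x
    have hex : ∃ M : ℕ, (2:ℝ) ^ (-(M:ℤ)) < ε := exists_zpow_lt hε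
    set M := Nat.find hex with hMdef
    have hMspec : (2:ℝ) ^ (-(M:ℤ)) < ε := Nat.find_spec hex
    have hM1 : 1 ≤ M := by
      by_contra h
      have hM0 : M = 0 := by omega
      rw [hM0] at hMspec
      norm_num at hMspec
      linarith
    have hMub : ε ≤ (2:ℝ) ^ (-((M-1:ℕ):ℤ)) := by
      have := Nat.find_min hex (show M - 1 < M by omega)
      push_neg at this
      exact this
    set y : ℕ → Bool := fun i => if M + 1 ≤ i ∧ i ≤ M + N + 1 then true else x i with hy
    refine ⟨y, ?_⟩
    intro z hz
    have hzy : rho z y < (2:ℝ) ^ (-((M+N+2:ℕ):ℤ)) := by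
      refine lt_of_lt_of_le hz ?_
      calc (2:ℝ) ^ (-((N+3:ℕ):ℤ)) * ε ≤ (2:ℝ) ^ (-((N+3:ℕ):ℤ)) * (2:ℝ) ^ (-((M-1:ℕ):ℤ)) :=
            mul_le_mul_of_nonneg_left hMub (by positivity)
        _ = (2:ℝ) ^ (-((M+N+2:ℕ):ℤ)) := by
            rw [← zpow_add₀ (by norm_num : (2:ℝ) ≠ 0)]
            congr 1
            have : ((M-1:ℕ):ℤ) = (M:ℤ) - 1 := by push_cast [Nat.cast_sub hM1]; ring
            push_cast [this]; ring
    have hag : ∀ i ≤ M + N + 2, z i = y i := agree_of_rho_lt hzy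
    constructor
    · show rho z x < ε
      have hagx : ∀ i < M + 1, z i = x i := by
        intro i hi
        rw [hag i (by omega), hy]
        simp only
        rw [if_neg (by omega)]
      calc rho z x ≤ (2:ℝ) ^ (-((M+1:ℕ):ℤ)) := rho_le_of_agree hagx
        _ < (2:ℝ) ^ (-(M:ℤ)) := by
            apply zpow_lt_zpow_right₀ one_lt_two (by omega)
        _ < ε := hMspec
    · intro hzG
      obtain ⟨k, hk, hfalse⟩ := hzG (M + 1)
      have : z (M + 1 + k) = true := by
        rw [hag (M+1+k) (by omega), hy]
        simp only
        rw [if_pos (by omega)]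
      rw [this] at hfalse
      exact Bool.true_eq_false.mp hfalse



lemma getD_append_cases (a b : List Bool) (i : ℕ) :
    (a ++ b).getD i false =
      if i < a.length then a.getD i false else b.getD (i - a.length) false := by
  split
  · exact List.getD_append _ _ _ _ (by assumption)
  · exact List.getD_append_right _ _ _ _ (by omega)

lemma getD_replicate_false (m j : ℕ) : (List.replicate m false).getD j false = false := by
  rcases lt_or_ge j m with h | h
  · rw [List.getD_eq_getElem _ _ (by simpa using h), List.getElem_replicate]
  · exact List.getD_eq_default  _ _ (by simpa using h)

lemma getD_singleton_false (j : ℕ) : ([false] : List Bool).getD j false = false := by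
  rcases j with _ | j <;> simp [List.getD]

lemma prefix_getD {l l' : List Bool} (h : l <+: l') {i : ℕ} (hi : i < l.length) :
    l.getD i false = l'.getD i false := by
  have hi' : i < l'.length := lt_of_lt_of_le hi h.length_le
  rw [List.getD_eq_getElem _ _ hi, List.getD_eq_getElem _ _ hi', h.getElem hi]

lemma Cyl_append_subset (u v : List Bool) : Cyl (u ++ v) ⊆ Cyl u := by
  intro z hz i hi
  have := hz i (by simp; omega)
  rwa [List.getD_append _ _ _ _ hi] at this

noncomputable def buildP (x : ℕ → Bool) (hx : ThickB x) (F : ℕ → Set (ℕ → Bool))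
    (C : ℕ → ℕ)
    (hole : ∀ n s, ∃ t : List Bool, t.length ≤ C n ∧ Cyl (s ++ t) ∩ F n = ∅) :
    ℕ → List Bool
  | 0 => []
  | n + 1 =>
    let s := buildP x hx F C hole n
    let m := Classical.choose (hx (s.length + C n))
    ((s ++ List.replicate m false) ++
      Classical.choose (hole n (s ++ List.replicate m false))) ++ [false]

section Build
variable (x : ℕ → Bool) (hx : ThickB x) (F : ℕ → Set (ℕ → Bool)) (C : ℕ → ℕ)
  (hole : ∀ n s, ∃ t : List Bool, t.length ≤ C n ∧ Cyl (s ++ t) ∩ F n = ∅)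

lemma buildP_prefix (n : ℕ) : buildP x hx F C hole n <+: buildP x hx F C hole (n + 1) := by
  conv_rhs => rw [buildP]
  simp only [List.append_assoc]
  exact List.prefix_append _ _

lemma buildP_mono {a b : ℕ} (h : a ≤ b) :
    buildP x hx F C hole a <+: buildP x hx F C hole b := by
  induction b with
  | zero => simp_all
  | succ b ih =>
    rcases Nat.lt_or_ge a (b+1) with h' | h'
    · exact (ih (by omega)).trans (buildP_prefix x hx F C hole b)
    · have : a = b + 1 := by omega
      rw [this]

lemma buildP_length (n : ℕ) : n ≤ (buildP x hx F C hole n).length := by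
  induction n with
  | zero => simp
  | succ n ih =>
    rw [buildP]
    simp only [List.length_append, List.length_replicate, List.length_singleton]
    omega

lemma buildP_inv (n : ℕ) :
    ∀ i, (buildP x hx F C hole n).getD i false = true → x i = true := by
  induction n with
  | zero => intro i h; simp [buildP] at h
  | succ n ih =>
    intro i h
    rw [buildP] at h
    have hmspec := Classical.choose_spec
      (hx ((buildP x hx F C hole n).length + C n))
    have htspec := (Classical.choose_spec
      (hole n (buildP x hx F C hole n ++
        List.replicate (Classical.choose (hx ((buildP x hx F C hole n).length + C n))) false))).1
    rw [getD_append_cases, getD_append_cases, getD_append_cases] at h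
    simp only [List.length_append, List.length_replicate] at h
    split_ifs at h with h1 h2 h3
    · exact ih i h
    · rw [getD_replicate_false] at h; exact absurd h (by simp)
    · push_neg at h2
      have := hmspec
        (i - Classical.choose (hx ((buildP x hx F C hole n).length + C n))) (by omega)
      rwa [show Classical.choose (hx ((buildP x hx F C hole n).length + C n)) +
        (i - Classical.choose (hx ((buildP x hx F C hole n).length + C n))) = i by omega] at this
    · rw [getD_singleton_false] at h; exact absurd h (by simp)

lemma buildP_disj (n : ℕ) : Cyl (buildP x hx F C hole (n + 1)) ∩ F n = ∅ := by
  have htspec := (Classical.choose_spec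
    (hole n (buildP x hx F C hole n ++
      List.replicate (Classical.choose (hx ((buildP x hx F C hole n).length + C n))) false))).2
  rw [buildP]
  apply Set.eq_empty_of_subset_empty
  intro z hz
  have : z ∈ Cyl (buildP x hx F C hole n ++
      List.replicate (Classical.choose (hx ((buildP x hx F C hole n).length + C n))) false ++
      Classical.choose (hole n (buildP x hx F C hole n ++
        List.replicate (Classical.choose (hx ((buildP x hx F C hole n).length + C n))) false)))
      ∩ F n := ⟨Cyl_append_subset _ _ hz.1, hz.2⟩
  rw [htspec] at this
  exact this

end Build






/-- An ideal is σ-porous iff it is contained in Thick⁺. -/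
theorem ideal_sigmaPorous_iff_subset_thickPlus (I : Set (ℕ → Bool))
    (hI : IsIdealB I) :
    SigmaPorous I ↔ ∀ x ∈ I, ¬ ThickB x := by
  constructor
  · rintro ⟨F, hFp, hFsub⟩ x hxI hxT
    choose C hC using fun n => porous_holes (hFp n)
    set p := buildP x hxT F C hC with hp
    have hyCyl : ∀ n, (fun i => (p (i+1)).getD i false) ∈ Cyl (p n) := by
      intro n i hi
      show (p (i+1)).getD i false = (p n).getD i false
      rcases le_total (i+1) n with h | h
      · exact prefix_getD (buildP_mono x hxT F C hC h)
          (lt_of_lt_of_le (Nat.lt_succ_self i) (buildP_length x hxT F C hC (i+1)))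
      · exact (prefix_getD (buildP_mono x hxT F C hC h) hi).symm
    have hyI : (fun i => (p (i+1)).getD i false) ∈ I :=
      hI.2.1 _ x (fun i hyi => buildP_inv x hxT F C hC (i+1) i hyi) hxI
    obtain ⟨n, hn⟩ := Set.mem_iUnion.mp (hFsub hyI)
    have hcontr : (fun i => (p (i+1)).getD i false) ∈ Cyl (p (n+1)) ∩ F n :=
      ⟨hyCyl (n+1), hn⟩
    rw [hp, buildP_disj x hxT F C hC n] at hcontr
    exact hcontr
  · intro h
    refine ⟨fun N => {y | ∀ n, ∃ k ≤ N, y (n+k) = false}, fun N => porous_G N, ?_⟩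
    intro x hxI
    have hx := h x hxI
    unfold ThickB at hx
    push_neg at hx
    obtain ⟨p, hp⟩ := hx
    refine Set.mem_iUnion.mpr ⟨p, fun n => ?_⟩
    obtain ⟨k, hk1, hk2⟩ := hp n
    exact ⟨k, hk1, by simpa using hk2⟩
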